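/- arXiv:math/0108198 — 2 statements merged into one kernel-verified Lean document; each statement's English description precedes it below -/
import Mathlib

section
/- Let f : ℝ → ℝ be continuous with f(s)/s → l > 0 as s → 0⁺, f > 0 on (0,1), and let U₀ : [0,∞) → (0,1) be a C², strictly positive, strictly decreasing solution of U₀''(r) + ((2n-1)/r) U₀'(r) + f(U₀(r)) = 0 with lim_{r→∞} U₀(r) = 0. Then no such U₀ exists (a contradiction arises). -/
open Set Filter

set_option maxHeartbeats 2000000 in
/-- no strictly decreasing solution `U₀ : [0,∞) → (0,1)` of
`U₀'' + ((2n-1)/r)U₀' + f(U₀) = 0` with `U₀ → 0` at infinity exists, when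
`f(s)/s → l > 0` as `s → 0⁺` and `f > 0` on `(0,1)`. -/
theorem stmt5 (n : ℕ) (hn : 1 ≤ n) (l : ℝ) (hl : 0 < l)
    (f : ℝ → ℝ) (hf : Continuous f)
    (hflim : Tendsto (fun s => f s / s) (nhdsWithin 0 (Ioi 0)) (nhds l))
    (hfpos : ∀ s ∈ Ioo (0:ℝ) 1, 0 < f s)
    (U : ℝ → ℝ) (hU : ContDiffOn ℝ 2 U (Ici 0))
    (hrange : ∀ r ≥ (0:ℝ), U r ∈ Ioo (0:ℝ) 1)
    (hanti : StrictAntiOn U (Ici 0))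
    (hU'0 : deriv U 0 = 0)
    (hode : ∀ r > (0:ℝ),
      deriv (deriv U) r + ((2 * n - 1 : ℝ) / r) * deriv U r + f (U r) = 0)
    (hlim : Tendsto U atTop (nhds 0)) :
    False := by
  set m : ℕ := 2 * n - 1 with hm
  have hm1 : 1 ≤ m := by omega
  have hmc : ((m : ℕ) : ℝ) = 2 * (n : ℝ) - 1 := by
    have h : m + 1 = 2 * n := by omega
    have h2 := congrArg (Nat.cast : ℕ → ℝ) h
    push_cast at h2
    linarith
  have hUpos : ∀ r ≥ (0:ℝ), 0 < U r := fun r hr => (hrange r hr).1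
  have hU2 : ContDiffOn ℝ 2 U (Ioi 0) := hU.mono Ioi_subset_Ici_self
  have hDU : ∀ r ∈ Ioi (0:ℝ), HasDerivAt U (deriv U r) r := fun r hr =>
    ((hU2.differentiableOn (by norm_num)).differentiableAt
      (isOpen_Ioi.mem_nhds hr)).hasDerivAt
  have hC1 : ContDiffOn ℝ 1 (deriv U) (Ioi 0) :=
    hU2.deriv_of_isOpen isOpen_Ioi (by norm_num)
  have hDU2 : ∀ r ∈ Ioi (0:ℝ), HasDerivAt (deriv U) (deriv (deriv U) r) r := fun r hr =>
    ((hC1.differentiableOn one_ne_zero).differentiableAt (isOpen_Ioi.mem_nhds hr)).hasDerivAt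
  set g : ℝ → ℝ := fun r => r ^ m * deriv U r with hgdef
  -- derivative of g
  have hg : ∀ r ∈ Ioi (0:ℝ), HasDerivAt g (-(r ^ m * f (U r))) r := by
    intro r hr
    have hr0 : (0:ℝ) < r := hr
    have hrne : r ≠ 0 := ne_of_gt hr0
    have h1 := (hasDerivAt_pow m r).mul (hDU2 r hr)
    have h2 : deriv (deriv U) r = -(((m:ℝ) / r) * deriv U r) - f (U r) := by
      rw [hmc]; have := hode r hr0; linarith
    have hrm : r ^ m = r * r ^ (m - 1) := by
      rw [← pow_succ']; congr 1; omega
    refine h1.congr_deriv ?_; symm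
    rw [h2, hrm]
    field_simp
    ring
  -- g is strictly decreasing on (0,∞)
  have hganti : StrictAntiOn g (Ioi 0) := by
    apply strictAntiOn_of_deriv_neg (convex_Ioi 0)
    · exact fun x hx => ((hg x hx).continuousAt).continuousWithinAt
    · intro x hx
      rw [interior_Ioi] at hx
      rw [(hg x hx).deriv]
      have hfUx : 0 < f (U x) := hfpos _ (hrange x (le_of_lt hx))
      have : 0 < x ^ m := pow_pos hx m
      nlinarith
  -- deriv U 1 ≤ 0
  have hU'1 : deriv U 1 ≤ 0 := by
    have h1 : HasDerivWithinAt U (deriv U 1) (Ioi 1) 1 :=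
      (hDU 1 (by norm_num)).hasDerivWithinAt
    rw [hasDerivWithinAt_iff_tendsto_slope] at h1
    have hIoi : (Ioi (1:ℝ)) \ {1} = Ioi 1 := by
      rw [diff_singleton_eq_self]; simp
    rw [hIoi] at h1
    refine le_of_tendsto h1 ?_
    filter_upwards [self_mem_nhdsWithin] with t ht
    have ht1 : (1:ℝ) < t := ht
    have hUt : U t < U 1 := hanti (by norm_num) (by simp; linarith) ht1
    rw [slope_def_field]
    apply div_nonpos_of_nonpos_of_nonneg <;> linarith
  have hg1 : g 1 ≤ 0 := by simp [hgdef, hU'1]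
  have hg2 : g 2 < g 1 := hganti (by norm_num) (by norm_num) (by norm_num)
  set c₁ : ℝ := -g 2 with hc₁def
  have hc₁ : 0 < c₁ := by simp only [hc₁def]; linarith
  have hgle : ∀ r ≥ (2:ℝ), g r ≤ -c₁ := by
    intro r hr
    have := hganti.antitoneOn (show (2:ℝ) ∈ Ioi 0 by norm_num)
      (show r ∈ Ioi (0:ℝ) by simp; linarith) hr
    simp only [hc₁def]; linarith
  have hU'le : ∀ r ≥ (2:ℝ), deriv U r ≤ -c₁ / r ^ m := by
    intro r hr
    have hrp : (0:ℝ) < r := by linarith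
    have hrm : (0:ℝ) < r ^ m := pow_pos hrp m
    have h1 : g r ≤ -c₁ := hgle r hr
    have heq : deriv U r = g r / r ^ m := by
      rw [hgdef]; field_simp
    rw [heq]
    gcongr
  -- polynomial lower bound : c₁ * r ≤ U r * (2r)^m for r ≥ 2
  have hlow : ∀ r ≥ (2:ℝ), c₁ * r ≤ U r * (2 * r) ^ m := by
    intro r hr
    have hrp : (0:ℝ) < r := by linarith
    have h2rp : (0:ℝ) < (2 * r) ^ m := pow_pos (by linarith) m
    set a : ℝ := c₁ / (2 * r) ^ m with hadef
    have hap : 0 < a := div_pos hc₁ h2rp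
    have hψ : AntitoneOn (fun s => U s + a * s) (Icc r (2 * r)) := by
      apply antitoneOn_of_deriv_nonpos (convex_Icc _ _)
      · exact (hU.continuousOn.mono (fun s hs => by
          simp only [mem_Icc] at hs; simp; linarith)).add
          (continuous_const.mul continuous_id).continuousOn
      · intro s hs
        rw [interior_Icc] at hs
        have hsp : (0:ℝ) < s := by
          have := hs.1; linarith
        have hlin : HasDerivAt (fun y : ℝ => a * y) a s := by
          simpa using (hasDerivAt_id s).const_mul a
        exact ((hDU s hsp).add hlin).differentiableAt.differentiableWithinAt
      · intro s hs
        rw [interior_Icc] at hs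
        have hs2 : (2:ℝ) ≤ s := by have := hs.1; linarith
        have hsp : (0:ℝ) < s := by linarith
        have hlin : HasDerivAt (fun y : ℝ => a * y) a s := by
          simpa using (hasDerivAt_id s).const_mul a
        rw [show (fun s => U s + a * s) = U + fun y => a * y from rfl, ((hDU s hsp).add hlin).deriv]
        have h1 : deriv U s ≤ -c₁ / s ^ m := hU'le s hs2
        have h2 : c₁ / (2 * r) ^ m ≤ c₁ / s ^ m := by
          apply div_le_div_of_nonneg_left (le_of_lt hc₁) (pow_pos hsp m)
          apply pow_le_pow_left₀ (le_of_lt hsp)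
          linarith [hs.2]
        simp only [mul_one, hadef]
        have : -c₁ / s ^ m = -(c₁ / s ^ m) := by ring
        linarith [this ▸ h1]
    have hkey := hψ (show r ∈ Icc r (2*r) by constructor <;> linarith)
      (show 2*r ∈ Icc r (2*r) by constructor <;> linarith) (by linarith)
    simp only at hkey
    have hU2r : 0 < U (2 * r) := hUpos (2*r) (by linarith)
    have : a * r ≤ U r := by linarith
    rw [hadef] at this
    rw [ge_iff_le, ← div_le_iff₀ h2rp] at *
    calc c₁ * r / (2*r)^m = c₁ / (2*r)^m * r := by ring
    _ ≤ U r := this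
  -- eventually f(s) ≥ (l/2) s near 0⁺
  have hev : ∀ᶠ s in nhdsWithin 0 (Ioi 0), l / 2 < f s / s :=
    hflim.eventually (eventually_gt_nhds (by linarith))
  rw [eventually_nhdsWithin_iff, Metric.eventually_nhds_iff] at hev
  obtain ⟨ε, hε, hball⟩ := hev
  have hfε : ∀ s : ℝ, 0 < s → s < ε → l / 2 * s ≤ f s := by
    intro s hs hsε
    have hd : dist s 0 < ε := by
      rw [Real.dist_eq, sub_zero, abs_of_pos hs]; exact hsε
    have := hball hd hs
    rw [lt_div_iff₀ hs] at this
    linarith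
  obtain ⟨R₀, hR₀⟩ := eventually_atTop.mp (hlim.eventually_lt_const hε)
  set R : ℝ := max R₀ 2 with hRdef
  have hR2 : (2:ℝ) ≤ R := le_max_right _ _
  have hRp : (0:ℝ) < R := by linarith
  have hfU : ∀ s ≥ R, l / 2 * U s ≤ f (U s) := fun s hs =>
    hfε (U s) (hUpos s (by linarith)) (hR₀ s (le_trans (le_max_left _ _) hs))
  -- middle estimate: for r ≥ 2R, deriv U r ≤ -δ * U r
  set δ : ℝ := l * R / (2 * ((m:ℝ) + 1)) with hδdef
  have hmp : (0:ℝ) < (m:ℝ) + 1 := by positivity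
  have hδp : 0 < δ := by rw [hδdef]; positivity
  have hU'δ : ∀ r ≥ 2 * R, deriv U r ≤ -δ * U r := by
    intro r hr
    have hrp : (0:ℝ) < r := by linarith
    have hUr : 0 < U r := hUpos r (by linarith)
    set b : ℝ := l / 2 * U r / ((m:ℝ) + 1) with hbdef
    have hbp : 0 < b := by rw [hbdef]; positivity
    have hbm : b * ((m:ℝ) + 1) = l / 2 * U r := by
      rw [hbdef]; field_simp
    have hder : ∀ s : ℝ, 0 < s →
        HasDerivAt (fun s => g s + b * s ^ (m+1))
          (-(s ^ m * f (U s)) + b * (((m:ℝ) + 1) * s ^ m)) s := by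
      intro s hs
      have h1 := (hg s hs).add ((hasDerivAt_pow (m+1) s).const_mul b)
      refine h1.congr_deriv ?_
      push_cast
      ring_nf
    have hχ : AntitoneOn (fun s => g s + b * s ^ (m+1)) (Icc R r) := by
      apply antitoneOn_of_deriv_nonpos (convex_Icc _ _)
      · intro s hs
        have hsp : (0:ℝ) < s := by have := hs.1; simp only [mem_Icc] at hs; linarith
        exact (hder s hsp).continuousAt.continuousWithinAt
      · intro s hs
        rw [interior_Icc] at hs
        have hsp : (0:ℝ) < s := by linarith [hs.1]
        exact (hder s hsp).differentiableAt.differentiableWithinAt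
      · intro s hs
        rw [interior_Icc] at hs
        have hsR : R ≤ s := le_of_lt hs.1
        have hsp : (0:ℝ) < s := by linarith
        rw [(hder s hsp).deriv]
        have h1 : l / 2 * U s ≤ f (U s) := hfU s hsR
        have h2 : U r ≤ U s := hanti.antitoneOn (by simp; linarith)
          (by simp; linarith) (le_of_lt hs.2)
        have h3 : l / 2 * U r ≤ l / 2 * U s :=
          mul_le_mul_of_nonneg_left h2 (by linarith)
        have hsm : (0:ℝ) < s ^ m := pow_pos hsp m
        have : b * (((m:ℝ) + 1) * s ^ m) = (l / 2 * U r) * s ^ m := by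
          rw [← hbm]; ring
        rw [this]
        nlinarith
    have hRr : R ≤ r := by linarith
    have hkey := hχ (show R ∈ Icc R r by constructor <;> linarith)
      (show r ∈ Icc R r by constructor <;> linarith) hRr
    simp only at hkey
    have hgR : g R ≤ -c₁ := hgle R hR2
    have hRm : R ^ (m+1) ≤ r ^ (m+1) / 2 := by
      have h1 : R ≤ r / 2 := by linarith
      have h2 : R ^ (m+1) ≤ (r / 2) ^ (m+1) :=
        pow_le_pow_left₀ (le_of_lt hRp) h1 _
      have h3 : (r / 2) ^ (m+1) = r ^ (m+1) / 2 ^ (m+1) := div_pow r 2 (m+1)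
      have h4 : (2:ℝ) ≤ 2 ^ (m+1) := by
        calc (2:ℝ) = 2 ^ 1 := (pow_one 2).symm
        _ ≤ 2 ^ (m+1) := pow_le_pow_right₀ (by norm_num) (by omega)
      have h5 : (0:ℝ) < r ^ (m+1) := pow_pos hrp _
      have h6 : r ^ (m+1) / 2 ^ (m+1) ≤ r ^ (m+1) / 2 :=
        div_le_div_of_nonneg_left (le_of_lt h5) (by norm_num) h4
      linarith
    -- g r ≤ -(b/2) r^{m+1}
    have hgr : g r ≤ -(b / 2) * r ^ (m+1) := by
      have h10 : b * R ^ (m+1) ≤ b * (r ^ (m+1) / 2) :=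
        mul_le_mul_of_nonneg_left hRm (le_of_lt hbp)
      linarith
    -- deriv U r = g r / r^m ≤ -(b/2) * r
    have hrmpos : (0:ℝ) < r ^ m := pow_pos hrp m
    have hder' : deriv U r * r ^ m ≤ (-(b / 2) * r) * r ^ m := by
      have : r ^ (m+1) = r * r ^ m := by rw [pow_succ]; ring
      calc deriv U r * r ^ m = g r := by rw [hgdef]; ring
      _ ≤ -(b / 2) * r ^ (m+1) := hgr
      _ = (-(b / 2) * r) * r ^ m := by rw [this]; ring
    have h7 : deriv U r ≤ -(b / 2) * r := le_of_mul_le_mul_right hder' hrmpos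
    have h8 : -(b / 2) * r ≤ -(b / 2) * (2 * R) := by
      have h81 : (0:ℝ) ≤ b / 2 := by positivity
      have h82 := mul_le_mul_of_nonneg_left hr h81
      linarith
    have h9 : -(b / 2) * (2 * R) = -δ * U r := by
      rw [hbdef, hδdef]; field_simp
    linarith
  -- exponential decay
  set A : ℝ := U (2 * R) * Real.exp (δ * (2 * R)) with hAdef
  have hexp : AntitoneOn (fun s => U s * Real.exp (δ * s)) (Ici (2 * R)) := by
    apply antitoneOn_of_deriv_nonpos (convex_Ici _)
    · exact (hU.continuousOn.mono (fun s hs => by simp at hs ⊢; linarith)).mul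
        (Real.continuous_exp.comp (continuous_const.mul continuous_id)).continuousOn
    · intro s hs
      rw [interior_Ici] at hs
      have hsp : (0:ℝ) < s := by have : 2 * R < s := hs; linarith
      have hlin : HasDerivAt (fun y : ℝ => δ * y) δ s := by
        simpa using (hasDerivAt_id s).const_mul δ
      exact ((hDU s hsp).mul hlin.exp).differentiableAt.differentiableWithinAt
    · intro s hs
      rw [interior_Ici] at hs
      have hs2R : 2 * R ≤ s := le_of_lt hs
      have hsp : (0:ℝ) < s := by linarith
      have hlin : HasDerivAt (fun y : ℝ => δ * y) δ s := by
        simpa using (hasDerivAt_id s).const_mul δ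
      rw [show (fun s => U s * Real.exp (δ * s)) = U * fun x => Real.exp (δ * x) from rfl, ((hDU s hsp).mul hlin.exp).deriv]
      have h1 : deriv U s ≤ -δ * U s := hU'δ s hs2R
      have h2 : (0:ℝ) < Real.exp (δ * s) := Real.exp_pos _
      nlinarith
  have hAbd : ∀ r ≥ 2 * R, U r * Real.exp (δ * r) ≤ A := by
    intro r hr
    exact hexp (show 2*R ∈ Ici (2*R) from self_mem_Ici) (show r ∈ Ici (2*R) from hr) hr
  -- final contradiction
  have hδtop : Tendsto (fun r : ℝ => δ * r) atTop atTop :=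
    Tendsto.const_mul_atTop hδp tendsto_id
  have hbase := (Real.tendsto_pow_mul_exp_neg_atTop_nhds_zero (m-1)).comp hδtop
  have hT : Tendsto (fun r : ℝ => A * 2 ^ m * (r ^ (m-1) * Real.exp (-(δ * r))))
      atTop (nhds 0) := by
    have h1 := hbase.const_mul (A * 2 ^ m / δ ^ (m-1))
    rw [mul_zero] at h1
    refine h1.congr fun r => ?_
    simp only [Function.comp_apply]
    rw [mul_pow]
    field_simp
  have hevfin : ∀ᶠ r in atTop,
      A * 2 ^ m * (r ^ (m-1) * Real.exp (-(δ * r))) < c₁ := hT.eventually_lt_const hc₁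
  obtain ⟨r, hr1, hr2⟩ := (hevfin.and (eventually_ge_atTop (2 * R))).exists
  -- now derive contradiction at r
  have hrp : (0:ℝ) < r := by linarith
  have hr2' : (2:ℝ) ≤ r := by linarith
  have hexpp : (0:ℝ) < Real.exp (δ * r) := Real.exp_pos _
  have hUr : U r ≤ A * Real.exp (-(δ * r)) := by
    have := hAbd r hr2
    rw [Real.exp_neg]
    rw [← le_div_iff₀ hexpp] at this
    rw [div_eq_mul_inv] at this
    exact this
  have hlow' := hlow r hr2'
  have h2rm : (2 * r) ^ m = 2 ^ m * r ^ m := mul_pow 2 r m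
  have hrm1 : r ^ m = r ^ (m-1) * r := by
    conv_lhs => rw [show m = (m-1) + 1 by omega]
    rw [pow_succ]
  have hUrnn : 0 ≤ U r := le_of_lt (hUpos r (by linarith))
  have hchain : c₁ * r ≤ A * 2 ^ m * (r ^ (m-1) * Real.exp (-(δ * r))) * r := by
    calc c₁ * r ≤ U r * (2 * r) ^ m := hlow'
    _ ≤ (A * Real.exp (-(δ * r))) * (2 * r) ^ m := by
        apply mul_le_mul_of_nonneg_right hUr (by positivity)
    _ = A * 2 ^ m * (r ^ (m-1) * Real.exp (-(δ * r))) * r := by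
        rw [h2rm, hrm1]; ring
  have := le_of_mul_le_mul_right hchain hrp
  linarith
end

section
/- There is no function U : ℝ → ℝ of class C², no vector α ∈ ℝ^{2n} \ {0} together with ν > 0, such that the function u(z,t) = U(α·z + νt) on ℝ^{2n+1} satisfies (|α|² - 4ν (Jα·z) + 4|z|²ν²) U''(α·z + νt) = U(α·z + νt)(U(α·z + νt)² - 1) for all (z,t), unless U is constant with value in {-1,0,1}; in particular no such u can satisfy -1 < u < 1 and ∂u/∂t > 0. -/
open Set

/-- there is no non-constant one-dimensional profile in a direction involving
the center. If `u(z,t) = U(α·z + νt)` with `α = (a,b) ≠ 0`, `ν > 0`, satisfies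
`(|α|² - 4ν(Jα·z) + 4|z|²ν²) U'' = U(U²-1)` everywhere (here `Jα·z = b·x - a·y`),
then `U` is constant with value in `{-1,0,1}`; in particular `u` cannot satisfy
`-1 < u < 1` and `∂u/∂t = ν U' > 0`. -/
theorem stmt6 (n : ℕ) (hn : 1 ≤ n) (U : ℝ → ℝ) (hU : ContDiff ℝ 2 U)
    (a b : EuclideanSpace ℝ (Fin n)) (hab : ¬(a = 0 ∧ b = 0)) (ν : ℝ) (hν : 0 < ν)
    (hpde : ∀ (x y : EuclideanSpace ℝ (Fin n)) (t : ℝ),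
      (‖a‖ ^ 2 + ‖b‖ ^ 2 - 4 * ν * ((inner ℝ b x : ℝ) - (inner ℝ a y : ℝ))
          + 4 * (‖x‖ ^ 2 + ‖y‖ ^ 2) * ν ^ 2) *
        deriv (deriv U) ((inner ℝ a x : ℝ) + (inner ℝ b y : ℝ) + ν * t) =
      U ((inner ℝ a x : ℝ) + (inner ℝ b y : ℝ) + ν * t) *
        (U ((inner ℝ a x : ℝ) + (inner ℝ b y : ℝ) + ν * t) ^ 2 - 1)) :
    (∃ c : ℝ, (∀ s : ℝ, U s = c) ∧ (c = -1 ∨ c = 0 ∨ c = 1)) ∧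
    ¬((∀ (x y : EuclideanSpace ℝ (Fin n)) (t : ℝ),
          -1 < U ((inner ℝ a x : ℝ) + (inner ℝ b y : ℝ) + ν * t) ∧
          U ((inner ℝ a x : ℝ) + (inner ℝ b y : ℝ) + ν * t) < 1) ∧
      (∀ (x y : EuclideanSpace ℝ (Fin n)) (t : ℝ),
          0 < ν * deriv U ((inner ℝ a x : ℝ) + (inner ℝ b y : ℝ) + ν * t))) := by
  have hK : 0 < ‖a‖ ^ 2 + ‖b‖ ^ 2 := by
    rcases not_and_or.mp hab with h | h
    · have := norm_pos_iff.mpr h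
      nlinarith [sq_nonneg ‖b‖]
    · have := norm_pos_iff.mpr h
      nlinarith [sq_nonneg ‖a‖]
  set K := ‖a‖ ^ 2 + ‖b‖ ^ 2 with hKdef
  -- Step 1: pointwise cubic equation
  have hval : ∀ s : ℝ, U s = -1 ∨ U s = 0 ∨ U s = 1 := by
    intro s
    have h1 := hpde 0 0 (s / ν)
    have h2 := hpde a b ((s - K) / ν)
    simp only [inner_zero_right, norm_zero, real_inner_self_eq_norm_sq] at h1 h2
    rw [mul_div_cancel₀ _ (ne_of_gt hν), zero_add, zero_add] at h1
    have harg : ‖a‖ ^ 2 + ‖b‖ ^ 2 + ν * ((s - K) / ν) = s := by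
      rw [mul_div_cancel₀ _ (ne_of_gt hν)]; rw [hKdef]; ring
    have hsym : (inner ℝ b a : ℝ) = (inner ℝ a b : ℝ) := real_inner_comm a b
    rw [harg, hsym] at h2
    have h3 : (4 * K * ν ^ 2) * deriv (deriv U) s = 0 := by
      linear_combination h2 - h1
    have hdd : deriv (deriv U) s = 0 := by
      rcases mul_eq_zero.mp h3 with h | h
      · exfalso; nlinarith [pow_pos hν 2]
      · exact h
    have hz : U s * (U s ^ 2 - 1) = 0 := by
      rw [hdd] at h1; rw [← h1]; ring
    rcases mul_eq_zero.mp hz with h | h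
    · right; left; exact h
    · have h4 : (U s - 1) * (U s + 1) = 0 := by nlinarith
      rcases mul_eq_zero.mp h4 with h' | h'
      · right; right; linarith
      · left; linarith
  have hcont : Continuous U := hU.continuous
  have ivt : ∀ (m x y : ℝ), U x ≤ m → m ≤ U y → ∃ t, U t = m := by
    intro m x y h1 h2
    exact intermediate_value_univ x y hcont ⟨h1, h2⟩
  have hhalf : ∀ m : ℝ, m = (1 : ℝ) / 2 ∨ m = -(1 : ℝ) / 2 → ¬∃ t, U t = m := by
    rintro m hm ⟨t, ht⟩
    rcases hval t with h' | h' | h' <;> rcases hm with hm | hm <;> subst hm <;> linarith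
  have hconst : ∀ s : ℝ, U s = U 0 := by
    intro s
    by_contra h
    rcases hval s with hs | hs | hs <;> rcases hval 0 with h0 | h0 | h0
    · exact h (hs.trans h0.symm)
    · exact hhalf _ (Or.inr rfl) (ivt (-(1:ℝ)/2) s 0 (by linarith) (by linarith))
    · exact hhalf _ (Or.inl rfl) (ivt ((1:ℝ)/2) s 0 (by linarith) (by linarith))
    · exact hhalf _ (Or.inr rfl) (ivt (-(1:ℝ)/2) 0 s (by linarith) (by linarith))
    · exact h (hs.trans h0.symm)
    · exact hhalf _ (Or.inl rfl) (ivt ((1:ℝ)/2) s 0 (by linarith) (by linarith))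
    · exact hhalf _ (Or.inl rfl) (ivt ((1:ℝ)/2) 0 s (by linarith) (by linarith))
    · exact hhalf _ (Or.inl rfl) (ivt ((1:ℝ)/2) 0 s (by linarith) (by linarith))
    · exact h (hs.trans h0.symm)
  have hUeq : U = fun _ => U 0 := funext hconst
  constructor
  · exact ⟨U 0, hconst, hval 0⟩
  · rintro ⟨-, hpos⟩
    have := hpos 0 0 0
    rw [hUeq] at this
    simp at this
end
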